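/- For every l ≥ 3, every k ≥ 2, and every n ≥ 2kl, there exists an l-uniform hypergraph H on n vertices with χ_cf(H) = k and χ_um(H) = n − ⌈n/k⌉ − l + 4; hence the bound χ_um(H) ≤ n − ⌈n/k⌉ − l + 4 for l-uniform hypergraphs is tight. -/

import Mathlib

open scoped Classical

noncomputable section

/-- A conflict-free coloring of a hyperedge set `E` with `k` colors: every hyperedge
has some color occurring on exactly one of its vertices. -/
def IsCFColoring {V : Type} {k : ℕ} (E : Set (Finset V)) (C : V → Fin k) : Prop :=
  ∀ e ∈ E, ∃ c : Fin k, (e.filter fun v => C v = c).card = 1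

/-- A unique-maximum coloring of a hyperedge set `E` with `k` colors: every hyperedge
has exactly one vertex whose color is maximum on the hyperedge. -/
def IsUMColoring {V : Type} {k : ℕ} (E : Set (Finset V)) (C : V → Fin k) : Prop :=
  ∀ e ∈ E, ∃! v, v ∈ e ∧ ∀ u ∈ e, C u ≤ C v

/-- An odd coloring of a hyperedge set `E` with `k` colors: every hyperedge
has some color occurring on an odd number of its vertices. -/
def IsOddColoring {V : Type} {k : ℕ} (E : Set (Finset V)) (C : V → Fin k) : Prop :=
  ∀ e ∈ E, ∃ c : Fin k, Odd ((e.filter fun v => C v = c).card)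

/-- The conflict-free chromatic number of a hypergraph. -/
def cfNum {V : Type} (E : Set (Finset V)) : ℕ :=
  sInf {k | ∃ C : V → Fin k, IsCFColoring E C}

/-- The unique-maximum chromatic number of a hypergraph. -/
def umNum {V : Type} (E : Set (Finset V)) : ℕ :=
  sInf {k | ∃ C : V → Fin k, IsUMColoring E C}

/-- The odd chromatic number of a hypergraph. -/
def oddNum {V : Type} (E : Set (Finset V)) : ℕ :=
  sInf {k | ∃ C : V → Fin k, IsOddColoring E C}

/-- The hyperedges of the path hypergraph of a graph `G`: vertex sets of simple paths. -/
def pathEdges {V : Type} (G : SimpleGraph V) : Set (Finset V) :=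
  {S | ∃ (u v : V) (p : G.Walk u v), p.IsPath ∧ S = p.support.toFinset}

/-- Unique-maximum chromatic number of a graph with respect to paths. -/
def UM {V : Type} (G : SimpleGraph V) : ℕ := umNum (pathEdges G)

/-- Conflict-free chromatic number of a graph with respect to paths. -/
def CF {V : Type} (G : SimpleGraph V) : ℕ := cfNum (pathEdges G)

/-- Odd chromatic number of a graph with respect to paths. -/
def ODD {V : Type} (G : SimpleGraph V) : ℕ := oddNum (pathEdges G)

/-- The complete binary tree with `d` levels (`2^d - 1` vertices), with vertices the
binary strings of length `< d`; each vertex `l` is adjacent to its children `b :: l`. -/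
def binaryTree (d : ℕ) : SimpleGraph {l : List Bool // l.length < d} :=
  SimpleGraph.fromRel fun a b => ∃ bit : Bool, b.1 = bit :: a.1

/-- `IsSubdivPaths G H f P` : the data `f` (branch vertices) and `P` (a path of `H` for
every edge of `G`) witness that `H` contains a subdivision of `G` as a subgraph:
`f` is injective, the paths are internally disjoint from each other and from the
branch vertices. -/
def IsSubdivPaths {V W : Type} (G : SimpleGraph V) (H : SimpleGraph W) (f : V → W)
    (P : ∀ u v, G.Adj u v → H.Walk (f u) (f v)) : Prop :=
  Function.Injective f ∧
  (∀ u v (h : G.Adj u v), (P u v h).IsPath) ∧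
  (∀ u v (h : G.Adj u v), P v u h.symm = (P u v h).reverse) ∧
  (∀ u v (h : G.Adj u v) (w : W),
    w ∈ (P u v h).support → w ≠ f u → w ≠ f v → w ∉ Set.range f) ∧
  (∀ u v (h : G.Adj u v) (u' v' : V) (h' : G.Adj u' v'), s(u, v) ≠ s(u', v') →
    ∀ w : W, w ∈ (P u v h).support → w ∈ (P u' v' h').support → w ∈ Set.range f)

/-- `H` contains a subdivision of `G` as a subgraph. -/
def ContainsSubdivision {V W : Type} (G : SimpleGraph V) (H : SimpleGraph W) : Prop :=
  ∃ f P, IsSubdivPaths G H f P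

/-- `IsSubdivision G H f P` : the data `f`, `P` witness that `H` is (exactly) a
subdivision of `G`: additionally to `IsSubdivPaths`, every vertex of `H` and every
edge of `H` comes from some path replacing an edge of `G`, or is a branch vertex. -/
def IsSubdivision {V W : Type} (G : SimpleGraph V) (H : SimpleGraph W) (f : V → W)
    (P : ∀ u v, G.Adj u v → H.Walk (f u) (f v)) : Prop :=
  IsSubdivPaths G H f P ∧
  (∀ w : W, w ∈ Set.range f ∨ ∃ u v h, w ∈ (P u v h).support) ∧
  (∀ a b : W, H.Adj a b ↔ ∃ u v h, s(a, b) ∈ (P u v h).edges)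

/-- `H` is a subdivision of `G`. -/
def Subdivides {V W : Type} (G : SimpleGraph V) (H : SimpleGraph W) : Prop :=
  ∃ f P, IsSubdivision G H f P

/-- A graph is UM-critical if every proper subgraph has strictly smaller
unique-maximum chromatic number with respect to paths. -/
def UMCritical {V : Type} (G : SimpleGraph V) : Prop :=
  ∀ G' : G.Subgraph, G' ≠ ⊤ → UM G'.coe < UM G

/-- A graph is `k`-UM-critical if it is UM-critical and its UM number equals `k`. -/
def UMCriticalK {V : Type} (k : ℕ) (G : SimpleGraph V) : Prop :=
  UMCritical G ∧ UM G = k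

/-- A family of sequences of distinct elements of `Fin n` is prefix set-free if no
nonempty prefix of a member (including the member itself) has the same underlying set
as another member. -/
def IsPSF {n : ℕ} (F : Finset (List (Fin n))) : Prop :=
  (∀ l ∈ F, l.Nodup) ∧
  ∀ A ∈ F, ∀ B ∈ F, A ≠ B →
    ∀ p : List (Fin n), p ≠ [] → p <+: A → p.toFinset ≠ B.toFinset

/-- A `[k,d,n]` prefix set-free family: ground set `Fin n`, every sequence of length at
least `k`, and at least `2^d` members. -/
def IsPSFFamily (k d n : ℕ) (F : Finset (List (Fin n))) : Prop :=
  IsPSF F ∧ (∀ l ∈ F, k ≤ l.length) ∧ 2 ^ d ≤ F.card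

namespace Stmt3Aux
open Finset



/-- class assignment: vertex `v` goes to class `0` if `v < q`, else class `1 + (v-q) % (k-1)`. -/
def gfun (k n q : ℕ) (hk : 2 ≤ k) : Fin n → Fin k := fun v =>
  if v.val < q then ⟨0, by omega⟩
  else ⟨1 + (v.val - q) % (k - 1), by
    have h := Nat.mod_lt (v.val - q) (y := k - 1) (by omega)
    omega⟩

def Pcl {n k : ℕ} (g : Fin n → Fin k) (i : Fin k) : Finset (Fin n) :=
  univ.filter (fun v => g v = i)

def Econ {n k : ℕ} (g : Fin n → Fin k) (l : ℕ) : Set (Finset (Fin n)) :=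
  {e | e.card = l ∧ ∃ i, (e.filter fun v => g v = i).card = 1}

section Arith

variable {l k n : ℕ}

lemma arith_facts (hl : 3 ≤ l) (hk : 2 ≤ k) (hn : 2 * k * l ≤ n) :
    2 * l ≤ (n + k - 1) / k ∧ (n + k - 1) / k ≤ n ∧ n ≤ k * ((n + k - 1) / k) ∧
      (n + k - 1) / k + (2 * l - 1) * (k - 1) ≤ n := by
  set q := (n + k - 1) / k with hq
  have hd := Nat.div_add_mod (n + k - 1) k
  have hm := Nat.mod_lt (n + k - 1) (y := k) (by omega)
  rw [← hq] at hd
  have hkq_le : k * q ≤ n + k - 1 := by omega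
  have hkq_ge : n ≤ k * q := by omega
  have h2l : 2 * l ≤ q := by
    have h1 : k * (2 * l) ≤ k * q := by
      calc k * (2 * l) = 2 * k * l := by ring
        _ ≤ n := hn
        _ ≤ k * q := hkq_ge
    exact Nat.le_of_mul_le_mul_left h1 (by omega)
  have hqn : q ≤ n := by
    by_contra hc
    push_neg at hc
    have t1 : k * (n + 1) ≤ k * q := Nat.mul_le_mul_left k (by omega)
    have t2 : 2 * (n + 1) ≤ k * (n + 1) := Nat.mul_le_mul_right _ (by omega)
    have t3 : 2 * k * 3 ≤ 2 * k * l := Nat.mul_le_mul_left (2 * k) hl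
    omega
  refine ⟨h2l, hqn, hkq_ge, ?_⟩
  -- q + (2l-1)(k-1) ≤ n
  obtain ⟨L, rfl⟩ : ∃ L, l = L + 3 := ⟨l - 3, by omega⟩
  obtain ⟨K, rfl⟩ : ∃ K, k = K + 2 := ⟨k - 2, by omega⟩
  have key : (K + 2) * (q + (2 * (L + 3) - 1) * (K + 2 - 1)) ≤ (K + 2) * n := by
    have h1 : (K + 2) * (q + (2 * (L + 3) - 1) * (K + 2 - 1))
        = (K + 2) * q + (K + 2) * ((2 * L + 5) * (K + 1)) := by
      have : 2 * (L + 3) - 1 = 2 * L + 5 := by omega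
      rw [this]
      have : K + 2 - 1 = K + 1 := by omega
      rw [this]; ring
    rw [h1]
    have h2 : (K + 2) * ((2 * L + 5) * (K + 1)) + (K + 1) ≤ (K + 1) * n := by
      have h3 : (K + 2) * (2 * L + 5) * (K + 1) + (K + 1) ≤ (K + 1) * (2 * (K + 2) * (L + 3)) := by
        nlinarith
      have h4 : (K + 1) * (2 * (K + 2) * (L + 3)) ≤ (K + 1) * n := by
        exact Nat.mul_le_mul_left _ hn
      calc (K + 2) * ((2 * L + 5) * (K + 1)) + (K + 1)
          = (K + 2) * (2 * L + 5) * (K + 1) + (K + 1) := by ring_nf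
        _ ≤ (K + 1) * (2 * (K + 2) * (L + 3)) := h3
        _ ≤ (K + 1) * n := h4
    have h5 : (K + 2) * n = n + (K + 1) * n := by ring
    omega
  exact Nat.le_of_mul_le_mul_left key (by omega)

end Arith

section Fibers

variable {l k n q : ℕ} (hk : 2 ≤ k)

lemma gfun_eq_zero_iff (v : Fin n) :
    gfun k n q hk v = ⟨0, by omega⟩ ↔ v.val < q := by
  unfold gfun
  by_cases h : v.val < q
  · simp [h]
  · simp [h, Fin.ext_iff]

lemma gfun_val (v : Fin n) (h : ¬ v.val < q) :
    (gfun k n q hk v) = ⟨1 + (v.val - q) % (k - 1), by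
      have := Nat.mod_lt (v.val - q) (y := k - 1) (by omega); omega⟩ := by
  unfold gfun; simp [h]

lemma card_fiber0 (hqn : q ≤ n) :
    (Pcl (gfun k n q hk) ⟨0, by omega⟩).card = q := by
  have hset : Pcl (gfun k n q hk) ⟨0, by omega⟩ = univ.filter (fun v : Fin n => v.val < q) := by
    apply filter_congr
    intro v _
    simp only [gfun_eq_zero_iff]
  have hcards : (univ.filter (fun v : Fin n => v.val < q)).card = (Finset.range q).card := by
    apply Finset.card_nbij (i := Fin.val)
    · intro a ha; simp only [mem_coe, mem_filter] at ha; simp [ha.2]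
    · intro a _ b _ hab; exact Fin.val_injective hab
    · intro j hj
      simp only [Finset.coe_range, Set.mem_Iio] at hj
      refine ⟨⟨j, lt_of_lt_of_le hj hqn⟩, ?_, rfl⟩
      simp [hj]
  rw [hset, hcards, Finset.card_range]


lemma mem_Pcl {g : Fin n → Fin k} {i : Fin k} {v : Fin n} : v ∈ Pcl g i ↔ g v = i := by
  simp [Pcl]

lemma card_fiber_pos (hl : 3 ≤ l) (c : ℕ) (hc : c < k - 1)
    (hlow : q + (2 * l - 1) * (k - 1) ≤ n) :
    2 * l - 1 ≤ (Pcl (gfun k n q hk) ⟨1 + c, by omega⟩).card := by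
  have hn0 : 0 < n := by
    have : 1 * 1 ≤ (2 * l - 1) * (k - 1) := Nat.mul_le_mul (by omega) (by omega)
    omega
  have hbound : ∀ t, t < 2 * l - 1 → q + c + t * (k - 1) < n := by
    intro t ht
    have h1 : t * (k - 1) ≤ (2 * l - 2) * (k - 1) := Nat.mul_le_mul_right _ (by omega)
    have h2 : (2 * l - 1) * (k - 1) = (2 * l - 2) * (k - 1) + (k - 1) := by
      rw [show 2 * l - 1 = (2 * l - 2) + 1 from by omega, Nat.succ_mul]
    omega
  have := Finset.card_le_card_of_injOn
    (f := fun t : ℕ => if h : q + c + t * (k - 1) < n then (⟨q + c + t * (k - 1), h⟩ : Fin n)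
      else ⟨0, hn0⟩)
    (s := Finset.range (2 * l - 1)) (t := Pcl (gfun k n q hk) ⟨1 + c, by omega⟩)
    ?_ ?_
  · simpa using this
  · intro t ht
    simp only [Finset.mem_coe, Finset.mem_range] at ht ⊢
    simp only [dif_pos (hbound t ht)]
    rw [mem_Pcl, gfun_val (hk := hk) _ (show ¬ q + c + t * (k - 1) < q by omega)]
    apply Fin.ext
    simp only
    have h3 : (q + c + t * (k - 1) - q) = c + t * (k - 1) := by omega
    rw [h3, Nat.add_mul_mod_self_right, Nat.mod_eq_of_lt hc]
  · intro t1 h1 t2 h2 heq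
    simp only [Finset.coe_range, Set.mem_Iio] at h1 h2
    simp only [dif_pos (hbound t1 h1), dif_pos (hbound t2 h2)] at heq
    have h4 : q + c + t1 * (k - 1) = q + c + t2 * (k - 1) := congrArg Fin.val heq
    have h5 : t1 * (k - 1) = t2 * (k - 1) := by omega
    exact Nat.eq_of_mul_eq_mul_right (by omega) h5

lemma card_fiber_lb (hl : 3 ≤ l) (hql : 2 * l ≤ q)
    (hlow : q + (2 * l - 1) * (k - 1) ≤ n) (i : Fin k) :
    2 * l - 1 ≤ (Pcl (gfun k n q hk) i).card := by
  by_cases hi : i = ⟨0, by omega⟩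
  · subst hi
    rw [card_fiber0 (hk := hk) (by omega)]
    omega
  · have hiv : 0 < i.val := by
      rcases Nat.eq_zero_or_pos i.val with h | h
      · exact absurd (Fin.ext h) hi
      · exact h
    have hc : i.val - 1 < k - 1 := by have := i.isLt; omega
    have heq : (⟨1 + (i.val - 1), by omega⟩ : Fin k) = i := Fin.ext (by simp; omega)
    have := card_fiber_pos (hk := hk) hl (i.val - 1) hc hlow
    rwa [heq] at this

lemma card_fiber_ub (hqn : q ≤ n) (hkq : n ≤ k * q) (i : Fin k) :
    (Pcl (gfun k n q hk) i).card ≤ q := by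
  by_cases hi : i = ⟨0, by omega⟩
  · subst hi; rw [card_fiber0 (hk := hk) hqn]
  · obtain ⟨K, rfl⟩ : ∃ K, k = K + 2 := ⟨k - 2, by omega⟩
    have hvge : ∀ v : Fin n, v ∈ Pcl (gfun (K + 2) n q hk) i → q ≤ v.val := by
      intro v hv
      rw [mem_Pcl] at hv
      by_contra hlt
      push_neg at hlt
      rw [show gfun (K + 2) n q hk v = ⟨0, by omega⟩ from (gfun_eq_zero_iff (hk := hk) v).mpr hlt]
        at hv
      exact hi hv.symm
    have hid : (K + 2) * q = q * (K + 1) + q := by ring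
    have := Finset.card_le_card_of_injOn
      (f := fun v : Fin n => (v.val - q) / (K + 1))
      (s := Pcl (gfun (K + 2) n q hk) i) (t := Finset.range q) ?_ ?_
    · simpa using this
    · intro v hv
      have h1 := hvge v hv
      have h2 := v.isLt
      simp only [Finset.mem_coe, Finset.mem_range]
      rw [Nat.div_lt_iff_lt_mul (by omega)]
      omega
    · intro v1 hv1 v2 hv2 heq
      simp only [Finset.mem_coe] at hv1 hv2
      have h1 := hvge v1 hv1
      have h2 := hvge v2 hv2
      rw [mem_Pcl, gfun_val (hk := hk) v1 (by omega)] at hv1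
      rw [mem_Pcl, gfun_val (hk := hk) v2 (by omega)] at hv2
      have hcv := congrArg Fin.val (hv1.trans hv2.symm)
      simp only [Fin.val_mk] at hcv
      rw [show K + 2 - 1 = K + 1 from rfl] at hcv
      have hmod : (v1.val - q) % (K + 1) = (v2.val - q) % (K + 1) := by omega
      simp only [] at heq
      have hdd : (K + 1) * ((v1.val - q) / (K + 1)) = (K + 1) * ((v2.val - q) / (K + 1)) := by
        rw [heq]
      have hd1 := Nat.div_add_mod (v1.val - q) (K + 1)
      have hd2 := Nat.div_add_mod (v2.val - q) (K + 1)
      apply Fin.ext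
      omega

end Fibers


section CF

variable {l k n j : ℕ}

lemma cf_upper (g : Fin n → Fin k) : IsCFColoring (Econ g l) g := by
  intro e he
  exact he.2

lemma cf_lower (g : Fin n → Fin k) (hl : 3 ≤ l)
    (hsz : ∀ i, 2 * l - 1 ≤ (Pcl g i).card) (hk : 1 ≤ k)
    (C : Fin n → Fin j) (hC : IsCFColoring (Econ g l) C) : k ≤ j := by
  by_contra hjk
  push_neg at hjk
  have hn0 : 0 < n := by
    have h1 := hsz ⟨0, by omega⟩
    have h2 := (Pcl (g := g) ⟨0, by omega⟩).card_le_univ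
    simp only [card_univ, Fintype.card_fin] at h2
    omega
  rcases Nat.eq_zero_or_pos j with hj0 | hj0
  · subst hj0; exact (C ⟨0, hn0⟩).elim0
  set D : Fin j → Finset (Fin n) := fun c => univ.filter (fun v => C v = c) with hD
  -- every color class not contained in a single part is small
  have hsmall : ∀ c : Fin j, (¬ ∃ a, D c ⊆ Pcl g a) → (D c).card ≤ 2 * l - 4 := by
    intro c hna
    by_contra hbig
    push_neg at hbig
    have hbig' : 2 * l - 3 ≤ (D c).card := by omega
    have hDne : (D c).Nonempty := card_pos.mp (by omega)
    obtain ⟨x₀, hx₀⟩ := hDne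
    have hnsub : ¬ D c ⊆ Pcl g (g x₀) := fun h => hna ⟨g x₀, h⟩
    obtain ⟨x₁, hx₁, hx₁'⟩ := Finset.not_subset.mp hnsub
    have hgx₁ : g x₁ ≠ g x₀ := by
      intro h; exact hx₁' (mem_Pcl.mpr h)
    have key : ∃ x ∈ D c, l - 1 ≤ ((D c).filter (fun v => g v ≠ g x)).card := by
      by_contra hno
      push_neg at hno
      have b0 := hno x₀ hx₀
      have b1 := hno x₁ hx₁
      have hsub : D c ⊆ ((D c).filter (fun v => g v ≠ g x₀)) ∪
          ((D c).filter (fun v => g v ≠ g x₁)) := by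
        intro v hv
        by_cases hv0 : g v = g x₀
        · exact mem_union_right _ (mem_filter.mpr ⟨hv, by rw [hv0]; exact fun h => hgx₁ h.symm⟩)
        · exact mem_union_left _ (mem_filter.mpr ⟨hv, hv0⟩)
      have := (card_le_card hsub).trans (card_union_le _ _)
      omega
    obtain ⟨x, hx, hcard⟩ := key
    obtain ⟨F, hFsub, hFcard⟩ := exists_subset_card_eq (n := l - 1) hcard
    have hxF : x ∉ F := fun h => (mem_filter.mp (hFsub h)).2 rfl
    have hecard : (insert x F).card = l := by
      rw [card_insert_of_notMem hxF, hFcard]; omega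
    have hef : ((insert x F).filter fun v => g v = g x) = {x} := by
      ext y
      simp only [mem_filter, mem_insert, mem_singleton]
      constructor
      · rintro ⟨hy | hy, hgy⟩
        · exact hy
        · exact absurd hgy (mem_filter.mp (hFsub hy)).2
      · rintro rfl; exact ⟨Or.inl rfl, rfl⟩
    have heE : insert x F ∈ Econ g l := ⟨hecard, ⟨g x, by rw [hef, card_singleton]⟩⟩
    obtain ⟨c', hc'⟩ := hC _ heE
    have hmono : ∀ y ∈ insert x F, C y = c := by
      intro y hy
      rcases mem_insert.mp hy with rfl | hy
      · exact (mem_filter.mp hx).2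
      · exact (mem_filter.mp (mem_filter.mp (hFsub hy)).1).2
    by_cases hcc : c' = c
    · have : (insert x F).filter (fun v => C v = c') = insert x F := by
        apply filter_true_of_mem
        intro y hy; rw [hmono y hy, hcc]
      rw [this, hecard] at hc'
      omega
    · have : (insert x F).filter (fun v => C v = c') = ∅ := by
        apply filter_false_of_mem
        intro y hy; rw [hmono y hy]; exact fun h => hcc h.symm
      rw [this, card_empty] at hc'
      omega
  set Small : Finset (Fin j) := univ.filter (fun c => ¬ ∃ a, D c ⊆ Pcl g a) with hSmall
  set Cov : Finset (Fin k) := univ.filter (fun b => Pcl g b ⊆ Small.biUnion D) with hCov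
  have claim1 : ∀ b : Fin k, b ∉ Cov →
      ∃ c, c ∉ Small ∧ (D c).Nonempty ∧ D c ⊆ Pcl g b := by
    intro b hb
    rw [hCov, mem_filter] at hb
    push_neg at hb
    obtain ⟨x, hxb, hxn⟩ := Finset.not_subset.mp (hb (mem_univ b))
    refine ⟨C x, ?_, ⟨x, by simp [hD]⟩, ?_⟩
    · intro hCx
      exact hxn (Finset.mem_biUnion.mpr ⟨C x, hCx, by simp [hD]⟩)
    · have : ∃ a, D (C x) ⊆ Pcl g a := by
        by_contra hna
        exact hxn (Finset.mem_biUnion.mpr ⟨C x, by rw [hSmall, mem_filter]; exact ⟨mem_univ _, hna⟩, by simp [hD]⟩)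
      obtain ⟨a, ha⟩ := this
      have : a = b := by
        have hx' : x ∈ D (C x) := by simp [hD]
        have := mem_Pcl.mp (ha hx')
        rw [← this, mem_Pcl.mp hxb]
      rwa [this] at ha
  -- injection from classes not covered into colors not in Small
  have claim2 : k - Cov.card ≤ j - Small.card := by
    have hinj := Finset.card_le_card_of_injOn
      (f := fun b => if hb : ∃ c, c ∉ Small ∧ (D c).Nonempty ∧ D c ⊆ Pcl g b
        then hb.choose else C ⟨0, hn0⟩)
      (s := univ \ Cov) (t := univ \ Small) ?_ ?_
    · have h1 : (univ \ Cov).card = k - Cov.card := by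
        rw [card_sdiff_of_subset (subset_univ _), card_univ, Fintype.card_fin]
      have h2 : (univ \ Small).card = j - Small.card := by
        rw [card_sdiff_of_subset (subset_univ _), card_univ, Fintype.card_fin]
      omega
    · intro b hb
      have hbn : b ∉ Cov := (Finset.mem_sdiff.mp hb).2
      have hex := claim1 b hbn
      simp only [dif_pos hex]
      exact Finset.mem_sdiff.mpr ⟨mem_univ _, hex.choose_spec.1⟩
    · intro b1 hb1 b2 hb2 heq
      simp only [Finset.coe_sdiff, Set.mem_diff, Finset.mem_coe] at hb1 hb2
      have hex1 := claim1 b1 hb1.2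
      have hex2 := claim1 b2 hb2.2
      simp only [dif_pos hex1, dif_pos hex2] at heq
      obtain ⟨-, ⟨x, hx⟩, hsub1⟩ := hex1.choose_spec
      obtain ⟨-, -, hsub2⟩ := hex2.choose_spec
      have hx2 : x ∈ D hex2.choose := heq ▸ hx
      have e1 := mem_Pcl.mp (hsub1 hx)
      have e2 := mem_Pcl.mp (hsub2 hx2)
      rw [← e1, ← e2]
  have hSmall_le : Small.card ≤ j := by
    have := Small.card_le_univ; simpa using this
  have claim3 : Small.card + 1 ≤ Cov.card := by
    have hCov_le : Cov.card ≤ k := by have := Cov.card_le_univ; simpa using this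
    omega
  -- size contradiction
  have claim4 : Cov.card * (2 * l - 1) ≤ Small.card * (2 * l - 4) := by
    have hdisj : (Cov : Set (Fin k)).PairwiseDisjoint (Pcl g) := by
      intro b1 _ b2 _ hne
      simp only [Function.onFun, Finset.disjoint_left]
      intro x hx1 hx2
      exact hne ((mem_Pcl.mp hx1).symm.trans (mem_Pcl.mp hx2))
    have hbu : Cov.biUnion (Pcl g) ⊆ Small.biUnion D := by
      intro x hx
      obtain ⟨b, hb, hxb⟩ := Finset.mem_biUnion.mp hx
      exact (mem_filter.mp hb).2 hxb
    calc Cov.card * (2 * l - 1) = Cov.card • (2 * l - 1) := by rw [smul_eq_mul]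
      _ ≤ ∑ b ∈ Cov, (Pcl g b).card := Finset.card_nsmul_le_sum _ _ _ (fun b _ => hsz b)
      _ = (Cov.biUnion (Pcl g)).card := (Finset.card_biUnion (fun b hb b' hb' h =>
            hdisj hb hb' h)).symm
      _ ≤ (Small.biUnion D).card := card_le_card hbu
      _ ≤ ∑ c ∈ Small, (D c).card := Finset.card_biUnion_le
      _ ≤ Small.card • (2 * l - 4) := Finset.sum_le_card_nsmul _ _ _
            (fun c hc => hsmall c (by simpa [hSmall] using hc))
      _ = Small.card * (2 * l - 4) := smul_eq_mul _ _
  have hmul1 : (Small.card + 1) * (2 * l - 1) ≤ Cov.card * (2 * l - 1) :=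
    Nat.mul_le_mul_right _ claim3
  have hmul2 : Small.card * (2 * l - 4) ≤ Small.card * (2 * l - 1) :=
    Nat.mul_le_mul_left _ (by omega)
  have hsucc : (Small.card + 1) * (2 * l - 1) = Small.card * (2 * l - 1) + (2 * l - 1) :=
    Nat.succ_mul _ _
  omega

end CF

section UMUpper

variable {l k n m : ℕ}

lemma um_upper (g : Fin n → Fin k) (i0 i1 : Fin k) (hi01 : i0 ≠ i1) (hl : 3 ≤ l)
    (hm2 : 2 ≤ m) (hq1 : l - 2 ≤ (Pcl g i1).card)
    (hcard : (Pcl g i0).card + (l - 2) + (m - 2) = n) :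
    ∃ C : Fin n → Fin m, IsUMColoring (Econ g l) C := by
  obtain ⟨L, hLsub, hLcard⟩ := exists_subset_card_eq (n := l - 2) hq1
  set R : Finset (Fin n) := univ \ (Pcl g i0 ∪ L) with hRdef
  have hdisj : Disjoint (Pcl g i0) L := by
    rw [Finset.disjoint_left]
    intro x hx hxL
    exact hi01 ((mem_Pcl.mp hx).symm.trans (mem_Pcl.mp (hLsub hxL)))
  have hRcard : R.card = m - 2 := by
    rw [hRdef, card_sdiff_of_subset (subset_univ _), card_union_of_disjoint hdisj, card_univ,
      Fintype.card_fin, hLcard]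
    omega
  set ρ := R.orderIsoOfFin hRcard with hρ
  set C : Fin n → Fin m := fun v =>
    if hv : v ∈ R then ⟨2 + (ρ.symm ⟨v, hv⟩).val, by have := (ρ.symm ⟨v, hv⟩).isLt; omega⟩
    else if v ∈ L then ⟨1, by omega⟩ else ⟨0, by omega⟩ with hCdef
  have hCR : ∀ v (hv : v ∈ R), C v = ⟨2 + (ρ.symm ⟨v, hv⟩).val,
      by have := (ρ.symm ⟨v, hv⟩).isLt; omega⟩ := by
    intro v hv; rw [hCdef]; simp only [dif_pos hv]
  have hLR : ∀ v ∈ L, v ∉ R := by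
    intro v hv; rw [hRdef]; simp only [mem_sdiff, mem_union]; tauto
  have hCL : ∀ v ∈ L, C v = ⟨1, by omega⟩ := by
    intro v hv; rw [hCdef]; simp only [dif_neg (hLR v hv), if_pos hv]
  have hC0 : ∀ v, v ∉ R → v ∉ L → C v = ⟨0, by omega⟩ := by
    intro v hv hvL; rw [hCdef]; simp only [dif_neg hv, if_neg hvL]
  have hCval_notR : ∀ v, v ∉ R → (C v).val ≤ 1 := by
    intro v hv
    by_cases hvL : v ∈ L
    · rw [hCL v hvL]
    · rw [hC0 v hv hvL]; simp
  have hCval_R : ∀ v (hv : v ∈ R), 2 ≤ (C v).val := by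
    intro v hv; rw [hCR v hv]
    simp
  have hinjR : ∀ v w (hv : v ∈ R) (hw : w ∈ R), C v = C w → v = w := by
    intro v w hv hw hvw
    rw [hCR v hv, hCR w hw] at hvw
    have h1 : (ρ.symm ⟨v, hv⟩).val = (ρ.symm ⟨w, hw⟩).val := by
      have := congrArg Fin.val hvw
      simp only [Fin.val_mk] at this
      omega
    have h2 : ρ.symm ⟨v, hv⟩ = ρ.symm ⟨w, hw⟩ := Fin.ext h1
    have h3 := ρ.symm.injective h2
    exact congrArg Subtype.val h3
  refine ⟨C, ?_⟩
  intro e he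
  obtain ⟨hecard, i, hie⟩ := he
  by_cases hRe : (e ∩ R).Nonempty
  · obtain ⟨b, hb, hbmax⟩ := Finset.exists_max_image (e ∩ R) C hRe
    have hbe : b ∈ e := (mem_inter.mp hb).1
    have hbR : b ∈ R := (mem_inter.mp hb).2
    refine ⟨b, ⟨hbe, ?_⟩, ?_⟩
    · intro u hu
      by_cases huR : u ∈ R
      · exact hbmax u (mem_inter.mpr ⟨hu, huR⟩)
      · have h1 := hCval_notR u huR
        have h2 := hCval_R b hbR
        rw [Fin.le_def]; omega
    · rintro y ⟨hye, hymax⟩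
      by_cases hyR : y ∈ R
      · have h1 : C y ≤ C b := hbmax y (mem_inter.mpr ⟨hye, hyR⟩)
        have h2 : C b ≤ C y := hymax b hbe
        exact hinjR y b hyR hbR (le_antisymm h1 h2)
      · exfalso
        have h1 := hCval_notR y hyR
        have h2 := hCval_R b hbR
        have h3 := hymax b hbe
        rw [Fin.le_def] at h3; omega
  · have hnotR : ∀ v ∈ e, v ∉ R := by
      intro v hv hvR; exact hRe ⟨v, mem_inter.mpr ⟨hv, hvR⟩⟩
    have hsplit : ∀ v ∈ e, v ∈ Pcl g i0 ∨ v ∈ L := by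
      intro v hv
      by_contra hc
      push_neg at hc
      apply hnotR v hv
      rw [hRdef]
      simp only [mem_sdiff, mem_union]
      exact ⟨mem_univ _, fun h => h.elim hc.1 hc.2⟩
    have hfil1 : e.filter (fun v => g v = i1) = e.filter (fun v => v ∈ L) := by
      ext v
      simp only [mem_filter]
      constructor
      · rintro ⟨hv, hgv⟩
        rcases hsplit v hv with h | h
        · exact absurd ((mem_Pcl.mp h).symm.trans hgv) hi01
        · exact ⟨hv, h⟩
      · rintro ⟨hv, hvL⟩
        exact ⟨hv, mem_Pcl.mp (hLsub hvL)⟩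
    have hfil0 : e.filter (fun v => g v = i0) = e.filter (fun v => v ∉ L) := by
      ext v
      simp only [mem_filter]
      constructor
      · rintro ⟨hv, hgv⟩
        refine ⟨hv, fun hvL => ?_⟩
        exact hi01 (hgv.symm.trans (mem_Pcl.mp (hLsub hvL)))
      · rintro ⟨hv, hvL⟩
        rcases hsplit v hv with h | h
        · exact ⟨hv, mem_Pcl.mp h⟩
        · exact absurd h hvL
    rcases eq_or_ne i i1 with rfl | hii1
    · rw [hfil1] at hie
      obtain ⟨w, hw⟩ := card_eq_one.mp hie
      have hwe : w ∈ e ∧ w ∈ L := by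
        have : w ∈ e.filter (fun v => v ∈ L) := hw ▸ mem_singleton_self w
        exact mem_filter.mp this
      have hwL : ∀ u ∈ e, u ∈ L → u = w := by
        intro u hu huL
        have : u ∈ e.filter (fun v => v ∈ L) := mem_filter.mpr ⟨hu, huL⟩
        rw [hw] at this
        exact mem_singleton.mp this
      refine ⟨w, ⟨hwe.1, ?_⟩, ?_⟩
      · intro u hu
        rw [hCL w hwe.2, Fin.le_def]
        exact hCval_notR u (hnotR u hu)
      · rintro y ⟨hye, hymax⟩
        have h1 := hymax w hwe.1
        rw [hCL w hwe.2, Fin.le_def] at h1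
        by_cases hyL : y ∈ L
        · exact hwL y hye hyL
        · exfalso
          rw [hC0 y (hnotR y hye) hyL] at h1
          simp at h1
    · rcases eq_or_ne i i0 with rfl | hii0
      · exfalso
        rw [hfil0] at hie
        have hsum := Finset.card_filter_add_card_filter_not (s := e)
          (p := fun v => v ∈ L)
        have hle : (e.filter (fun v => v ∈ L)).card ≤ l - 2 := by
          rw [← hLcard]
          exact card_le_card (fun v hv => (mem_filter.mp hv).2)
        have : (e.filter (fun v => ¬ v ∈ L)).card = 1 := hie
        omega
      · exfalso
        have : e.filter (fun v => g v = i) = ∅ := by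
          apply filter_false_of_mem
          intro v hv hgv
          rcases hsplit v hv with h | h
          · exact hii0 (hgv.symm.trans (mem_Pcl.mp h))
          · exact hii1 (hgv.symm.trans (mem_Pcl.mp (hLsub h)))
        rw [this, card_empty] at hie
        omega

end UMUpper

section UMLower

variable {l k n q j : ℕ} {g : Fin n → Fin k} {C : Fin n → Fin j}

lemma um_master (hC : IsUMColoring (Econ g l) C) {u v : Fin n} (huv : u ≠ v)
    (hcv : C v = C u) {e : Finset (Fin n)} (hu : u ∈ e) (hv : v ∈ e) (hecard : e.card = l)
    (hmax : ∀ x ∈ e, C x ≤ C u) (hsing : ∃ i, (e.filter fun x => g x = i).card = 1) :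
    False := by
  obtain ⟨w, hw, huniq⟩ := hC e ⟨hecard, hsing⟩
  have h1 := huniq u ⟨hu, hmax⟩
  have h2 := huniq v ⟨hv, fun x hx => (hmax x hx).trans (le_of_eq hcv.symm)⟩
  exact huv (h1.trans h2.symm)

lemma S_pair (hC : IsUMColoring (Econ g l) C) (hl : 3 ≤ l) {u v w : Fin n} (huv : u ≠ v)
    (hcv : C v = C u) (hcw : C w ≤ C u) (hgu : g w ≠ g u) (hgv : g w ≠ g v)
    {F : Finset (Fin n)} (hFc : ∀ x ∈ F, C x ≤ C u) (hFg : ∀ x ∈ F, g x ≠ g w)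
    (hFu : u ∉ F) (hFv : v ∉ F) (hFcard : F.card = l - 3) : False := by
  have hwu : w ≠ u := fun h => hgu (by rw [h])
  have hwv : w ≠ v := fun h => hgv (by rw [h])
  have hwF : w ∉ F := fun h => hFg w h rfl
  have hu_mem : u ∉ insert v F := by simp [huv, hFu]
  have hw_mem : w ∉ insert u (insert v F) := by simp [hwu, hwv, hwF]
  set e := insert w (insert u (insert v F)) with he
  have hecard : e.card = l := by
    rw [he, card_insert_of_notMem hw_mem, card_insert_of_notMem hu_mem,
      card_insert_of_notMem hFv, hFcard]
    omega
  apply um_master hC huv hcv (e := e) (by simp [he]) (by simp [he]) hecard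
  · intro x hx
    rw [he] at hx
    rcases mem_insert.mp hx with rfl | hx
    · exact hcw
    · rcases mem_insert.mp hx with rfl | hx
      · exact le_refl _
      · rcases mem_insert.mp hx with rfl | hx
        · exact le_of_eq hcv
        · exact hFc x hx
  · refine ⟨g w, ?_⟩
    have : e.filter (fun x => g x = g w) = {w} := by
      ext x
      simp only [mem_filter, he, mem_insert, mem_singleton]
      constructor
      · rintro ⟨rfl | rfl | rfl | hx, hgx⟩
        · rfl
        · exact absurd hgx.symm hgu
        · exact absurd hgx.symm hgv
        · exact absurd hgx (hFg x hx)
      · rintro rfl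
        exact ⟨Or.inl rfl, rfl⟩
    rw [this, card_singleton]

lemma S_split (hC : IsUMColoring (Econ g l) C) (hl : 3 ≤ l) {u v : Fin n} (huv : u ≠ v)
    (hcv : C v = C u) (hguv : g u ≠ g v) {F : Finset (Fin n)}
    (hFc : ∀ x ∈ F, C x ≤ C u) (hFg : ∀ x ∈ F, g x ≠ g v) (hFu : u ∉ F)
    (hFcard : F.card = l - 2) : False := by
  have hFv : v ∉ F := fun h => hFg v h rfl
  have hu_mem : u ∉ insert v F := by simp [huv, hFu]
  set e := insert u (insert v F) with he
  have hecard : e.card = l := by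
    rw [he, card_insert_of_notMem hu_mem, card_insert_of_notMem hFv, hFcard]
    omega
  apply um_master hC huv hcv (e := e) (by simp [he]) (by simp [he]) hecard
  · intro x hx
    rw [he] at hx
    rcases mem_insert.mp hx with rfl | hx
    · exact le_refl _
    · rcases mem_insert.mp hx with rfl | hx
      · exact le_of_eq hcv
      · exact hFc x hx
  · refine ⟨g v, ?_⟩
    have : e.filter (fun x => g x = g v) = {v} := by
      ext x
      simp only [mem_filter, he, mem_insert, mem_singleton]
      constructor
      · rintro ⟨rfl | rfl | hx, hgx⟩
        · exact absurd hgx hguv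
        · rfl
        · exact absurd hgx (hFg x hx)
      · rintro rfl
        exact ⟨Or.inr (Or.inl rfl), rfl⟩
    rw [this, card_singleton]

lemma um_lower (hl : 3 ≤ l) (hk : 2 ≤ k) (hql : 2 * l ≤ q)
    (hub : ∀ i, (Pcl g i).card ≤ q)
    (hC : IsUMColoring (Econ g l) C) : n + 4 ≤ j + q + l := by
  by_cases hinj : Function.Injective C
  · have h1 : Fintype.card (Fin n) ≤ Fintype.card (Fin j) := Fintype.card_le_of_injective C hinj
    simp only [Fintype.card_fin] at h1
    omega
  · set Rep : Finset (Fin j) := univ.filter (fun c => 2 ≤ (univ.filter (fun x => C x = c)).card)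
      with hRep
    have hRepNe : Rep.Nonempty := by
      rw [Function.not_injective_iff] at hinj
      obtain ⟨a, b, hab, hne⟩ := hinj
      refine ⟨C a, mem_filter.mpr ⟨mem_univ _, ?_⟩⟩
      have hsub : ({a, b} : Finset (Fin n)) ⊆ univ.filter (fun x => C x = C a) := by
        intro x hx
        rcases mem_insert.mp hx with rfl | hx
        · simp
        · rw [mem_singleton.mp hx]
          simp [hab.symm]
      calc 2 = ({a, b} : Finset (Fin n)).card := (card_pair hne).symm
        _ ≤ _ := card_le_card hsub
    set cstar := Rep.max' hRepNe with hcstar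
    have hcs : 2 ≤ (univ.filter (fun x => C x = cstar)).card :=
      (mem_filter.mp (Rep.max'_mem hRepNe)).2
    obtain ⟨u, hu, v, hv, huv⟩ := Finset.one_lt_card.mp hcs
    have hCu : C u = cstar := (mem_filter.mp hu).2
    have hCv : C v = cstar := (mem_filter.mp hv).2
    have hcvu : C v = C u := hCv.trans hCu.symm
    set Y : Finset (Fin n) := univ.filter (fun x => C x ≤ cstar) with hYdef
    have hmemY : ∀ x, x ∈ Y ↔ C x ≤ cstar := by
      intro x; rw [hYdef, mem_filter]; simp
    have huY : u ∈ Y := (hmemY u).mpr (le_of_eq hCu)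
    have hvY : v ∈ Y := (hmemY v).mpr (le_of_eq hCv)
    have hinj_above : Set.InjOn C (univ \ Y : Finset (Fin n)) := by
      intro a ha b hb hab
      by_contra hne
      have hsub : ({a, b} : Finset (Fin n)) ⊆ univ.filter (fun x => C x = C a) := by
        intro x hx
        rcases mem_insert.mp hx with rfl | hx
        · simp
        · rw [mem_singleton.mp hx]; simp [hab.symm]
      have h2 : 2 ≤ (univ.filter (fun x => C x = C a)).card :=
        le_trans (le_of_eq (card_pair hne).symm) (card_le_card hsub)
      have h3 : C a ∈ Rep := mem_filter.mpr ⟨mem_univ _, h2⟩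
      have h4 : C a ≤ cstar := Rep.le_max' _ h3
      have h5 : a ∈ Y := (hmemY a).mpr h4
      simp only [Finset.coe_sdiff, Set.mem_diff, Finset.mem_coe] at ha
      exact ha.2 h5
    set tY := (Y.image C).card with htY
    have hdisj2 : Disjoint ((univ \ Y).image C) (Y.image C) := by
      rw [Finset.disjoint_left]
      intro c hc1 hc2
      obtain ⟨a, ha, rfl⟩ := Finset.mem_image.mp hc1
      obtain ⟨b, hb, hcb⟩ := Finset.mem_image.mp hc2
      have h1 : ¬ C a ≤ cstar := fun h => (mem_sdiff.mp ha).2 ((hmemY a).mpr h)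
      have h2 : C b ≤ cstar := (hmemY b).mp hb
      rw [hcb] at h2
      exact h1 h2
    have hcount : (n - Y.card) + tY ≤ j := by
      have h1 : ((univ \ Y).image C).card = (univ \ Y).card :=
        Finset.card_image_of_injOn hinj_above
      have h2 : (univ \ Y).card = n - Y.card := by
        rw [card_sdiff_of_subset (subset_univ _), card_univ, Fintype.card_fin]
      have h3 : ((univ \ Y).image C ∪ Y.image C).card ≤ j := by
        have := card_le_univ ((univ \ Y).image C ∪ Y.image C)
        simpa using this
      rw [card_union_of_disjoint hdisj2, h1, h2] at h3
      exact h3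
    have hYn : Y.card ≤ n := by
      have := card_le_univ Y; simpa using this
    have htY1 : 1 ≤ tY := by
      rw [htY]
      exact card_pos.mpr ⟨cstar, Finset.mem_image.mpr ⟨u, huY, hCu⟩⟩
    suffices hkey : Y.card + 4 ≤ tY + q + l by omega
    have hYc : ∀ x ∈ Y, C x ≤ C u := by
      intro x hx; rw [hCu]; exact (hmemY x).mp hx
    -- SP1 : same-class pair, witness outside the class, big class trace
    have SP1 : ∀ u' v' w' : Fin n, u' ∈ Y → v' ∈ Y → w' ∈ Y → u' ≠ v' →
        C u' = cstar → C v' = cstar → g u' = g v' → g w' ≠ g u' →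
        l - 1 ≤ (Y.filter (fun x => g x = g u')).card → False := by
      intro u' v' w' hu'Y hv'Y hw'Y hne hcu' hcv' hgg hgw hcard
      have h1 : l - 3 ≤ ((Y.filter (fun x => g x = g u')) \ {u', v'}).card := by
        have h2 := Finset.le_card_sdiff ({u', v'} : Finset (Fin n))
          (Y.filter (fun x => g x = g u'))
        have h3 : ({u', v'} : Finset (Fin n)).card ≤ 2 := card_insert_le _ _ |>.trans (by simp)
        omega
      obtain ⟨F, hFsub, hFcard⟩ := exists_subset_card_eq h1
      have hFp : ∀ x ∈ F, (x ∈ Y ∧ g x = g u') ∧ x ∉ ({u', v'} : Finset (Fin n)) := by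
        intro x hx
        have := hFsub hx
        rw [Finset.mem_sdiff, mem_filter] at this
        exact this
      refine S_pair hC hl hne (hcv'.trans hcu'.symm) ?_ hgw (by rw [← hgg]; exact hgw)
        (F := F) ?_ ?_ ?_ ?_ hFcard
      · rw [hcu']; exact (hmemY w').mp hw'Y
      · intro x hx
        rw [hcu']; exact (hmemY x).mp ((hFp x hx).1.1)
      · intro x hx
        rw [(hFp x hx).1.2]
        intro h; exact hgw h.symm
      · intro h; exact (hFp u' h).2 (by simp)
      · intro h; exact (hFp v' h).2 (by simp)
    -- SP2 : same-class pair, small complement of the witness class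
    have SP2 : ∀ u' v' w' : Fin n, u' ∈ Y → v' ∈ Y → w' ∈ Y → u' ≠ v' →
        C u' = cstar → C v' = cstar → g u' = g v' → g w' ≠ g u' →
        l - 1 ≤ (Y.filter (fun x => ¬ g x = g w')).card → False := by
      intro u' v' w' hu'Y hv'Y hw'Y hne hcu' hcv' hgg hgw hcard
      have h1 : l - 3 ≤ ((Y.filter (fun x => ¬ g x = g w')) \ {u', v'}).card := by
        have h2 := Finset.le_card_sdiff ({u', v'} : Finset (Fin n))
          (Y.filter (fun x => ¬ g x = g w'))
        have h3 : ({u', v'} : Finset (Fin n)).card ≤ 2 := card_insert_le _ _ |>.trans (by simp)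
        omega
      obtain ⟨F, hFsub, hFcard⟩ := exists_subset_card_eq h1
      have hFp : ∀ x ∈ F, (x ∈ Y ∧ ¬ g x = g w') ∧ x ∉ ({u', v'} : Finset (Fin n)) := by
        intro x hx
        have := hFsub hx
        rw [Finset.mem_sdiff, mem_filter] at this
        exact this
      refine S_pair hC hl hne (hcv'.trans hcu'.symm) ?_ hgw (by rw [← hgg]; exact hgw)
        (F := F) ?_ ?_ ?_ ?_ hFcard
      · rw [hcu']; exact (hmemY w').mp hw'Y
      · intro x hx
        rw [hcu']; exact (hmemY x).mp ((hFp x hx).1.1)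
      · intro x hx
        exact fun h => (hFp x hx).1.2 h
      · intro h; exact (hFp u' h).2 (by simp)
      · intro h; exact (hFp v' h).2 (by simp)
    -- SP3 : split pair
    have SP3 : ∀ u' v' : Fin n, u' ∈ Y → v' ∈ Y → u' ≠ v' →
        C u' = cstar → C v' = cstar → ¬ g u' = g v' →
        l - 1 ≤ (Y.filter (fun x => ¬ g x = g v')).card → False := by
      intro u' v' hu'Y hv'Y hne hcu' hcv' hgg hcard
      have hu'mem : u' ∈ Y.filter (fun x => ¬ g x = g v') := mem_filter.mpr ⟨hu'Y, hgg⟩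
      have h1 : l - 2 ≤ ((Y.filter (fun x => ¬ g x = g v')).erase u').card := by
        rw [Finset.card_erase_of_mem hu'mem]
        omega
      obtain ⟨F, hFsub, hFcard⟩ := exists_subset_card_eq h1
      have hFp : ∀ x ∈ F, x ≠ u' ∧ x ∈ Y ∧ ¬ g x = g v' := by
        intro x hx
        have := hFsub hx
        rw [Finset.mem_erase, mem_filter] at this
        exact ⟨this.1, this.2⟩
      refine S_split hC hl hne (hcv'.trans hcu'.symm) hgg (F := F) ?_ ?_ ?_ hFcard
      · intro x hx
        rw [hcu']; exact (hmemY x).mp (hFp x hx).2.1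
      · intro x hx
        exact fun h => (hFp x hx).2.2 h
      · intro h; exact (hFp u' h).1 rfl
    by_cases hguv : g u = g v
    · by_cases hallY : ∀ x ∈ Y, g x = g u
      · have hsubP : Y ⊆ Pcl g (g u) := fun x hx => mem_Pcl.mpr (hallY x hx)
        have := (card_le_card hsubP).trans (hub (g u))
        omega
      · push_neg at hallY
        obtain ⟨w, hwY, hwg⟩ := hallY
        have hYi : (Y.filter (fun x => g x = g u)).card ≤ l - 2 := by
          by_contra h
          rw [not_le] at h
          exact SP1 u v w huY hvY hwY huv hCu hCv hguv hwg (by omega)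
        have hYh : (Y.filter (fun x => ¬ g x = g w)).card ≤ l - 2 := by
          by_contra h
          rw [not_le] at h
          exact SP2 u v w huY hvY hwY huv hCu hCv hguv hwg (by omega)
        by_cases honly : ∀ x ∈ Y, g x = g u ∨ g x = g w
        · have hsum := Finset.card_filter_add_card_filter_not
            (s := Y) (p := fun x => g x = g w)
          have hzq : (Y.filter (fun x => g x = g w)).card ≤ q := by
            refine (card_le_card ?_).trans (hub (g w))
            intro x hx
            exact mem_Pcl.mpr (mem_filter.mp hx).2
          by_cases hz : (Y.filter (fun x => g x = g w)).card ≤ l - 2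
          · omega
          · push_neg at hz
            by_cases hmono : ∀ x ∈ Y, C x = cstar
            · exfalso
              have h2 : 2 ≤ (Y.filter (fun x => g x = g w)).card := by omega
              obtain ⟨u', hu', v', hv', hne⟩ := Finset.one_lt_card.mp h2
              have hu'Y := (mem_filter.mp hu').1
              have hv'Y := (mem_filter.mp hv').1
              have hgu' : g u' = g w := (mem_filter.mp hu').2
              have hgv' : g v' = g w := (mem_filter.mp hv').2
              have hfiltereq : Y.filter (fun x => g x = g u') =
                  Y.filter (fun x => g x = g w) := by
                apply filter_congr
                intro x _
                rw [hgu']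
              refine SP1 u' v' u hu'Y hv'Y huY hne (hmono u' hu'Y) (hmono v' hv'Y)
                (hgu'.trans hgv'.symm) ?_ ?_
              · rw [hgu']; exact fun h => hwg h.symm
              · rw [hfiltereq]; omega
            · push_neg at hmono
              obtain ⟨x₀, hx₀Y, hx₀⟩ := hmono
              have htY2 : 2 ≤ tY := by
                rw [htY]
                apply Finset.one_lt_card.mpr
                refine ⟨cstar, Finset.mem_image.mpr ⟨u, huY, hCu⟩,
                  C x₀, Finset.mem_image.mpr ⟨x₀, hx₀Y, rfl⟩, fun h => hx₀ h.symm⟩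
              omega
        · push_neg at honly
          obtain ⟨w', hw'Y, hw'1, hw'2⟩ := honly
          have hYh' : (Y.filter (fun x => ¬ g x = g w')).card ≤ l - 2 := by
            by_contra h
            rw [not_le] at h
            exact SP2 u v w' huY hvY hw'Y huv hCu hCv hguv hw'1 (by omega)
          have hsub : Y ⊆ (Y.filter (fun x => ¬ g x = g w)) ∪
              (Y.filter (fun x => ¬ g x = g w')) := by
            intro x hx
            by_cases hxw : g x = g w
            · refine mem_union_right _ (mem_filter.mpr ⟨hx, ?_⟩)
              rw [hxw]
              exact fun h => hw'2 h.symm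
            · exact mem_union_left _ (mem_filter.mpr ⟨hx, hxw⟩)
          have := (card_le_card hsub).trans (card_union_le _ _)
          omega
    · have h1 : (Y.filter (fun x => ¬ g x = g v)).card ≤ l - 2 := by
        by_contra h
        rw [not_le] at h
        exact SP3 u v huY hvY huv hCu hCv hguv (by omega)
      have h2 : (Y.filter (fun x => ¬ g x = g u)).card ≤ l - 2 := by
        by_contra h
        rw [not_le] at h
        exact SP3 v u hvY huY huv.symm hCv hCu (fun hh => hguv hh.symm) (by omega)
      have hsub : Y ⊆ (Y.filter (fun x => ¬ g x = g u)) ∪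
          (Y.filter (fun x => ¬ g x = g v)) := by
        intro x hx
        by_cases hxu : g x = g u
        · refine mem_union_right _ (mem_filter.mpr ⟨hx, ?_⟩)
          rw [hxu]; exact hguv
        · exact mem_union_left _ (mem_filter.mpr ⟨hx, hxu⟩)
      have := (card_le_card hsub).trans (card_union_le _ _)
      omega

end UMLower

end Stmt3Aux



theorem stmt3 (l k n : ℕ) (hl : 3 ≤ l) (hk : 2 ≤ k) (hn : 2 * k * l ≤ n) :
    ∃ E : Set (Finset (Fin n)),
      (∀ e ∈ E, e.card = l) ∧ cfNum E = k ∧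
        umNum E = n - (n + k - 1) / k - l + 4 := by
  obtain ⟨hql, hqn, hkq, hlow⟩ := Stmt3Aux.arith_facts hl hk hn
  set q := (n + k - 1) / k with hq
  have h2l1 : 2 * l - 1 ≤ (2 * l - 1) * (k - 1) := Nat.le_mul_of_pos_right _ (by omega)
  set g := Stmt3Aux.gfun k n q hk with hg
  refine ⟨Stmt3Aux.Econ g l, fun e he => he.1, ?_, ?_⟩
  · -- cfNum = k
    apply le_antisymm
    · exact Nat.sInf_le ⟨g, Stmt3Aux.cf_upper g⟩
    · refine le_csInf ⟨k, g, Stmt3Aux.cf_upper g⟩ ?_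
      rintro j ⟨Cj, hCj⟩
      exact Stmt3Aux.cf_lower g hl
        (Stmt3Aux.card_fiber_lb (hk := hk) hl hql hlow) (by omega) Cj hCj
  · -- umNum = n - q - l + 4
    have hfib0 : (Stmt3Aux.Pcl g ⟨0, by omega⟩).card = q := Stmt3Aux.card_fiber0 (hk := hk) hqn
    have hfib1 : 2 * l - 1 ≤ (Stmt3Aux.Pcl g ⟨1, by omega⟩).card :=
      Stmt3Aux.card_fiber_lb (hk := hk) hl hql hlow _
    have hm2 : 2 ≤ n - q - l + 4 := by omega
    have hcard : (Stmt3Aux.Pcl g ⟨0, by omega⟩).card + (l - 2) + ((n - q - l + 4) - 2) = n := by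
      rw [hfib0]; omega
    obtain ⟨Cm, hCm⟩ := Stmt3Aux.um_upper (m := n - q - l + 4) g ⟨0, by omega⟩ ⟨1, by omega⟩
      (by simp [Fin.ext_iff]) hl hm2 (by omega) hcard
    apply le_antisymm
    · exact Nat.sInf_le ⟨Cm, hCm⟩
    · refine le_csInf ⟨n - q - l + 4, Cm, hCm⟩ ?_
      rintro j ⟨Cj, hCj⟩
      have := Stmt3Aux.um_lower hl hk hql
        (Stmt3Aux.card_fiber_ub (hk := hk) hqn hkq) hCj
      omega
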